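/- Let $X$ be a random vector in $\mathbb{R}^d$ and $Y$ a discrete random variable with finite entropy. Let $r_{n-1}: \mathbb{R}^d \to \{1,\dots,n-1\}$ and $r_n: \mathbb{R}^d \to \{1,\dots,n\}$ be measurable routers, and let $A^{(n-1)}_j, A^{(n)}_e \in \mathbb{R}^{d\times d}$ be fixed linear maps. Define $Z_{n-1} = A^{(n-1)}_{r_{n-1}(X)} X$ and $Z_n = A^{(n)}_{r_n(X)} X$. Assume (i) for each $e$ there exists $R_e \in \mathbb{R}^{d\times d}$ such that $A^{(n-1)}_{r_{n-1}(x)} x = R_e A^{(n)}_e x$ for all $x$ in the support of $X$ conditioned on $r_n(X) = e$; and (ii) there exists a measurable $\hat{e}: \mathbb{R}^d \to \{1,\dots,n\}$ with $r_n(X) = \hat{e}(Z_n)$ almost surely. Then $I(Y; Z_n) \geq I(Y; Z_{n-1})$. -/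

import Mathlib

open MeasureTheory ProbabilityTheory Real Matrix

noncomputable def mEntropyOf {S : Type*} [Fintype S] [MeasurableSpace S]
    (ν : Measure S) : ℝ :=
  ∑ y, Real.negMulLog ((ν {y}).toReal)

noncomputable def mEntropy {Ω S : Type*} [MeasurableSpace Ω] [Fintype S] [MeasurableSpace S]
    (μ : Measure Ω) (Y : Ω → S) : ℝ :=
  mEntropyOf (μ.map Y)

noncomputable def mCondEntropy {Ω β S : Type*} [MeasurableSpace Ω] [MeasurableSpace β]
    [Fintype S] [MeasurableSpace S] [DiscreteMeasurableSpace S] [Nonempty S]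
    (μ : Measure Ω) [IsFiniteMeasure μ] (Y : Ω → S) (Z : Ω → β) : ℝ :=
  ∫ z, mEntropyOf ((condDistrib Y Z μ) z) ∂(μ.map Z)

/-- Mutual information `I(Y ; Z) = H(Y) - H(Y ∣ Z)` for a finite-valued `Y`. -/
noncomputable def mMutualInfo {Ω β S : Type*} [MeasurableSpace Ω] [MeasurableSpace β]
    [Fintype S] [MeasurableSpace S] [DiscreteMeasurableSpace S] [Nonempty S]
    (μ : Measure Ω) [IsFiniteMeasure μ] (Y : Ω → S) (Z : Ω → β) : ℝ :=
  mEntropy μ Y - mCondEntropy μ Y Z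

/-- Topological support of a measure: points all of whose open neighbourhoods have
positive measure. -/
def measSupport {α : Type*} [TopologicalSpace α] [MeasurableSpace α] (ν : Measure α) : Set α :=
  {x | ∀ U : Set α, IsOpen U → x ∈ U → 0 < ν U}

open Filter

lemma abs_negMulLog_le_one {x : ℝ} (h0 : 0 ≤ x) (h1 : x ≤ 1) : |negMulLog x| ≤ 1 := by
  rw [abs_of_nonneg (negMulLog_nonneg h0 h1)]
  rcases eq_or_lt_of_le h0 with h | h
  · simp [← h, Real.negMulLog_zero]
  · have hl := Real.log_le_sub_one_of_pos (inv_pos.2 h)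
    rw [Real.log_inv] at hl
    have hxi : x * x⁻¹ = 1 := mul_inv_cancel₀ h.ne'
    have h2 : x * (-Real.log x) ≤ x * (x⁻¹ - 1) := mul_le_mul_of_nonneg_left hl h0
    simp only [Real.negMulLog]
    nlinarith

lemma negMulLog_le_tangent {a x : ℝ} (ha : 0 < a) (hx : 0 ≤ x) :
    negMulLog x ≤ negMulLog a + (-Real.log a - 1) * (x - a) := by
  rcases eq_or_lt_of_le hx with h | h
  · simp only [← h, Real.negMulLog_zero, Real.negMulLog]
    nlinarith
  · have hl := Real.log_le_sub_one_of_pos (div_pos ha h)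
    rw [Real.log_div ha.ne' h.ne'] at hl
    have h2 : x * (Real.log a - Real.log x) ≤ x * (a / x - 1) :=
      mul_le_mul_of_nonneg_left hl hx
    have hd : x * (a / x) = a := by field_simp
    simp only [Real.negMulLog]
    nlinarith

lemma measSupport_compl_null {α : Type*} [TopologicalSpace α]
    [SecondCountableTopology α] [MeasurableSpace α] (ν : Measure α) :
    ν (measSupport ν)ᶜ = 0 := by
  obtain ⟨b, hbc, hb⟩ := TopologicalSpace.exists_countable_basis α
  have hsub : (measSupport ν)ᶜ ⊆ ⋃₀ {U ∈ b | ν U = 0} := by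
    intro x hx
    simp only [measSupport, Set.mem_compl_iff, Set.mem_setOf_eq, not_forall] at hx
    obtain ⟨U, hU, hxU, hUν⟩ := hx
    obtain ⟨V, hVb, hxV, hVU⟩ := hb.2.exists_subset_of_mem_open hxU hU
    exact ⟨V, ⟨hVb, le_antisymm ((measure_mono hVU).trans (le_of_not_gt hUν)) (zero_le)⟩, hxV⟩
  refine measure_mono_null hsub ?_
  rw [measure_sUnion_null_iff (hbc.mono (Set.sep_subset _ _))]
  exact fun U hU => hU.2
lemma integral_negMulLog_le_condexp {Ω : Type*} {m0 : MeasurableSpace Ω} {μ : Measure Ω}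
    [IsProbabilityMeasure μ] {m : MeasurableSpace Ω} (hm : m ≤ m0) {f : Ω → ℝ}
    (hf : Integrable f μ) (h0 : 0 ≤ᵐ[μ] f) (h1 : f ≤ᵐ[μ] fun _ => (1:ℝ)) :
    ∫ ω, negMulLog (f ω) ∂μ ≤ ∫ ω, negMulLog ((μ[f|m]) ω) ∂μ := by
  haveI : SigmaFinite (μ.trim hm) := by infer_instance
  set g := μ[f|m] with hg
  have hg0 : 0 ≤ᵐ[μ] g := condExp_nonneg h0
  have hg1 : g ≤ᵐ[μ] fun _ => (1:ℝ) := by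
    have := condExp_mono (m := m) hf (integrable_const (1:ℝ)) h1
    rwa [condExp_const hm] at this
  have int_nmlf : Integrable (fun ω => negMulLog (f ω)) μ := by
    refine (integrable_const (1:ℝ)).mono'
      (Real.continuous_negMulLog.comp_aestronglyMeasurable hf.1) ?_
    filter_upwards [h0, h1] with ω hω0 hω1
    rw [Real.norm_eq_abs]; exact abs_negMulLog_le_one hω0 hω1
  have int_nmlg : Integrable (fun ω => negMulLog (g ω)) μ := by
    refine (integrable_const (1:ℝ)).mono'
      (Real.continuous_negMulLog.comp_aestronglyMeasurable integrable_condExp.1) ?_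
    filter_upwards [hg0, hg1] with ω hω0 hω1
    rw [Real.norm_eq_abs]; exact abs_negMulLog_le_one hω0 hω1
  have key : ∀ q : ℚ, 0 < (q:ℝ) →
      (μ[fun ω => negMulLog (f ω)|m]) ≤ᵐ[μ]
        fun ω => negMulLog q + (-Real.log q - 1) * (g ω - q) := by
    intro q hq
    set c : ℝ := negMulLog q + (Real.log q + 1) * q with hc
    set b : ℝ := -Real.log q - 1 with hb
    have step1 : (fun ω => negMulLog (f ω)) ≤ᵐ[μ] (fun _ => c) + b • f := by
      filter_upwards [h0] with ω hω0
      have := negMulLog_le_tangent hq hω0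
      simp only [Pi.add_apply, Pi.smul_apply, smul_eq_mul, hc, hb]
      nlinarith [this]
    have int_aff : Integrable ((fun _ => c) + b • f) μ :=
      (integrable_const c).add (hf.smul b)
    have step2 := condExp_mono (m := m) int_nmlf int_aff step1
    have step3 : μ[(fun _ => c) + b • f|m] =ᵐ[μ] fun ω => c + b * g ω := by
      refine (condExp_add (integrable_const c) (hf.smul b) m).trans ?_
      rw [condExp_const hm]
      filter_upwards [condExp_smul (μ := μ) (m := m) b f] with ω hω
      simp only [Pi.add_apply, hω, Pi.smul_apply, smul_eq_mul]
      rfl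
    filter_upwards [step2, step3] with ω h2 h3
    have h4 : (μ[fun ω => negMulLog (f ω)|m]) ω ≤ c + b * g ω := le_of_le_of_eq h2 h3
    have h5 : c + b * g ω = negMulLog q + b * (g ω - q) := by
      simp only [hc, hb]; ring
    linarith
  have all_q : ∀ᵐ ω ∂μ, ∀ q : ℚ, 0 < (q:ℝ) →
      (μ[fun ω => negMulLog (f ω)|m]) ω ≤ negMulLog q + (-Real.log q - 1) * (g ω - q) := by
    rw [ae_all_iff]
    intro q
    by_cases hq : 0 < (q:ℝ)
    · filter_upwards [key q hq] with ω h _; exact h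
    · filter_upwards with ω h; exact absurd h hq
  have ptwise : (μ[fun ω => negMulLog (f ω)|m]) ≤ᵐ[μ] fun ω => negMulLog (g ω) := by
    filter_upwards [all_q, hg0] with ω H hx0
    have hx0' : (0:ℝ) ≤ g ω := hx0
    refine le_of_forall_pos_le_add fun ε hε => ?_
    rcases eq_or_lt_of_le hx0' with hx | hx
    · obtain ⟨q, hq0, hqε⟩ := exists_rat_btwn hε
      have hH := H q hq0
      have hcq : negMulLog (q:ℝ) + (-Real.log q - 1) * (g ω - q) = (q:ℝ) := by
        rw [← hx]
        simp only [Real.negMulLog]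
        ring
      rw [hcq] at hH
      have hzero : negMulLog (g ω) = 0 := by rw [← hx, Real.negMulLog_zero]
      rw [hzero]
      linarith
    · have hφ : ContinuousAt (fun a : ℝ => negMulLog a + (-Real.log a - 1) * (g ω - a)) (g ω) :=
        (Real.continuous_negMulLog.continuousAt).add
          ((((Real.continuousAt_log hx.ne').neg.sub continuousAt_const)).mul
            (continuousAt_const.sub continuousAt_id))
      rw [Metric.continuousAt_iff] at hφ
      obtain ⟨δ, hδ0, hδ⟩ := hφ ε hε
      obtain ⟨q, hq1, hq2⟩ := exists_rat_btwn (sub_lt_self (g ω) (lt_min hδ0 hx))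
      have hq0 : 0 < (q:ℝ) := by
        have := min_le_right δ (g ω)
        linarith
      have hdist : dist (q:ℝ) (g ω) < δ := by
        rw [Real.dist_eq, abs_sub_lt_iff]
        have := min_le_left δ (g ω)
        constructor <;> linarith
      have hcl := hδ hdist
      rw [Real.dist_eq, abs_sub_lt_iff] at hcl
      have hφx : negMulLog (g ω) + (-Real.log (g ω) - 1) * (g ω - g ω) = negMulLog (g ω) := by
        ring
      rw [hφx] at hcl
      have hHq := H q hq0
      linarith [hcl.1]
  calc ∫ ω, negMulLog (f ω) ∂μ = ∫ ω, (μ[fun ω => negMulLog (f ω)|m]) ω ∂μ :=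
        (integral_condExp hm).symm
    _ ≤ ∫ ω, negMulLog (g ω) ∂μ := integral_mono_ae integrable_condExp int_nmlg ptwise

section
variable {Ω β S : Type*} [m0 : MeasurableSpace Ω] [mβ : MeasurableSpace β]
    [Fintype S] [MeasurableSpace S] [DiscreteMeasurableSpace S] [Nonempty S]
    (μ : Measure Ω) [IsProbabilityMeasure μ] {Y : Ω → S} {Z : Ω → β}

lemma mCondEntropy_eq_sum (hY : Measurable Y) (hZ : Measurable Z) :
    mCondEntropy μ Y Z
      = ∑ y : S, ∫ ω, negMulLog ((μ⟦Y ⁻¹' {y} | mβ.comap Z⟧) ω) ∂μ := by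
  have hmeas : ∀ y : S, Measurable fun z => ((condDistrib Y Z μ z) {y}).toReal := fun y =>
    (Kernel.measurable_coe _ (MeasurableSet.singleton y)).ennreal_toReal
  have hbd : ∀ y : S, ∀ z : β, |negMulLog (((condDistrib Y Z μ z) {y}).toReal)| ≤ 1 := by
    intro y z
    refine abs_negMulLog_le_one ENNReal.toReal_nonneg ?_
    exact ENNReal.toReal_le_of_le_ofReal one_pos.le (by simpa using prob_le_one)
  have h1 : mCondEntropy μ Y Z
      = ∫ ω, ∑ y : S, negMulLog (((condDistrib Y Z μ (Z ω)) {y}).toReal) ∂μ := by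
    rw [mCondEntropy]
    rw [integral_map hZ.aemeasurable]
    · rfl
    · exact Measurable.aestronglyMeasurable <| Finset.measurable_sum _ fun y _ =>
        Real.continuous_negMulLog.measurable.comp (hmeas y)
  rw [h1, integral_finset_sum]
  · refine Finset.sum_congr rfl fun y _ => ?_
    refine integral_congr_ae ?_
    filter_upwards [condDistrib_ae_eq_condExp hZ hY (MeasurableSet.singleton y)] with ω hω
    rw [← hω, measureReal_def]
  · intro y _
    refine (integrable_const (1:ℝ)).mono' ?_ ?_
    · exact Measurable.aestronglyMeasurable <|
        (Real.continuous_negMulLog.measurable.comp (hmeas y)).comp hZ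
    · exact Eventually.of_forall fun ω => by rw [Real.norm_eq_abs]; exact hbd y (Z ω)

end

section
variable {Ω β γ S : Type*} [m0 : MeasurableSpace Ω] [mβ : MeasurableSpace β]
    [mγ : MeasurableSpace γ]
    [Fintype S] [MeasurableSpace S] [DiscreteMeasurableSpace S] [Nonempty S]
    (μ : Measure Ω) [IsProbabilityMeasure μ] {Y : Ω → S} {Z : Ω → β}

lemma mCondEntropy_congr {Z' : Ω → β} (h : Z =ᵐ[μ] Z') :
    mCondEntropy μ Y Z = mCondEntropy μ Y Z' := by
  have h1 : μ.map (fun a => (Z a, Y a)) = μ.map (fun a => (Z' a, Y a)) :=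
    Measure.map_congr (h.mono fun ω hω => by simp only [hω])
  have h2 : μ.map Z = μ.map Z' := Measure.map_congr h
  simp only [mCondEntropy, condDistrib, h1, h2]

lemma mCondEntropy_le_comp (hY : Measurable Y) (hZ : Measurable Z)
    {g : β → γ} (hg : Measurable g) :
    mCondEntropy μ Y Z ≤ mCondEntropy μ Y (g ∘ Z) := by
  rw [mCondEntropy_eq_sum μ hY hZ, mCondEntropy_eq_sum μ hY (hg.comp hZ)]
  refine Finset.sum_le_sum fun y _ => ?_
  set f : Ω → ℝ := (Y ⁻¹' {y}).indicator (fun _ => (1:ℝ)) with hfdef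
  have hfint : Integrable f μ :=
    (integrable_const (1:ℝ)).indicator (hY (MeasurableSet.singleton y))
  have hf0 : 0 ≤ᵐ[μ] f :=
    Eventually.of_forall fun ω => Set.indicator_nonneg (fun _ _ => zero_le_one) ω
  have hf1 : f ≤ᵐ[μ] fun _ => (1:ℝ) :=
    Eventually.of_forall fun ω => Set.indicator_le_self' (fun _ _ => zero_le_one) ω
  set m1 : MeasurableSpace Ω := mβ.comap Z
  set m2 : MeasurableSpace Ω := mγ.comap (g ∘ Z)
  have hm1 : m1 ≤ m0 := hZ.comap_le
  have hm2 : m2 ≤ m0 := (hg.comp hZ).comap_le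
  have hm21 : m2 ≤ m1 := by
    calc m2 = (mγ.comap g).comap Z := MeasurableSpace.comap_comp.symm
      _ ≤ m1 := MeasurableSpace.comap_mono hg.comap_le
  set f1 : Ω → ℝ := μ[f|m1] with hf1def
  have hf10 : 0 ≤ᵐ[μ] f1 := condExp_nonneg hf0
  have hf11 : f1 ≤ᵐ[μ] fun _ => (1:ℝ) := by
    have := condExp_mono (m := m1) hfint (integrable_const (1:ℝ)) hf1
    rwa [condExp_const hm1] at this
  have step := integral_negMulLog_le_condexp hm2 integrable_condExp hf10 hf11
  refine step.trans (le_of_eq (integral_congr_ae ?_))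
  filter_upwards [condExp_condExp_of_le (f := f) (μ := μ) hm21 hm1] with ω hω
  rw [hω]

end

lemma measurable_mulVec_comp {ι Ω : Type*} [Countable ι] [MeasurableSpace ι]
    [MeasurableSingletonClass ι] [MeasurableSpace Ω] {d : ℕ}
    (M : ι → Matrix (Fin d) (Fin d) ℝ) {e : Ω → ι} (he : Measurable e)
    {v : Ω → Fin d → ℝ} (hv : Measurable v) :
    Measurable fun ω => (M (e ω)).mulVec (v ω) := by
  rw [measurable_pi_iff]
  intro i
  show Measurable fun ω => ∑ j, M (e ω) i j * v ω j
  exact Finset.measurable_sum _ fun j _ =>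
    ((measurable_of_countable (fun k => M k i j)).comp he).mul
      ((measurable_pi_apply j).comp hv)

lemma ae_mem_of_null_inter_compl {Ω ι : Type*} [MeasurableSpace Ω] [Countable ι]
    (μ : Measure Ω) (r : Ω → ι) (B : ι → Set Ω)
    (h : ∀ e, μ (r ⁻¹' {e} ∩ (B e)ᶜ) = 0) : ∀ᵐ ω ∂μ, ω ∈ B (r ω) := by
  rw [ae_iff]
  exact measure_mono_null (fun ω hω => Set.mem_iUnion.2 ⟨r ω, Set.mem_inter (Set.mem_preimage.2 rfl) hω⟩)
    (measure_iUnion_null h)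

lemma ae_mem_measSupport_cond {Ω ι : Type*} [MeasurableSpace Ω] [Countable ι]
    [MeasurableSpace ι] [MeasurableSingletonClass ι]
    (μ : Measure Ω) [IsFiniteMeasure μ] {d : ℕ}
    {X : Ω → (Fin d → ℝ)} (hX : Measurable X) {r : Ω → ι} (hr : Measurable r) :
    ∀ᵐ ω ∂μ, X ω ∈ measSupport ((μ[|r ⁻¹' {(r ω)}]).map X) := by
  have hE : ∀ e : ι, MeasurableSet (r ⁻¹' {e}) := fun e => hr (MeasurableSet.singleton e)
  have key : ∀ e : ι, μ (r ⁻¹' {e} ∩ X ⁻¹' (measSupport ((μ[|r ⁻¹' {e}]).map X))ᶜ) = 0 := by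
    intro e
    set ν := (μ[|r ⁻¹' {e}]).map X with hν
    have hν0 : ν (measSupport ν)ᶜ = 0 := measSupport_compl_null ν
    have h1 : (μ[|r ⁻¹' {e}]) (X ⁻¹' (measSupport ν)ᶜ) = 0 :=
      le_antisymm ((Measure.le_map_apply hX.aemeasurable _).trans hν0.le) (zero_le)
    rw [ProbabilityTheory.cond, Measure.smul_apply, smul_eq_mul] at h1
    rcases mul_eq_zero.1 h1 with h | h
    · exact absurd h (ENNReal.inv_ne_zero.2 (measure_ne_top μ _))
    · rw [Measure.restrict_apply' (hE e)] at h
      rwa [Set.inter_comm]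
  exact ae_mem_of_null_inter_compl μ r
    (fun e => X ⁻¹' (measSupport ((μ[|r ⁻¹' {e}]).map X))) key

/-- more experts cannot reduce label information under refinement. -/
theorem moe_refinement_info {Ω S : Type*} [MeasurableSpace Ω]
    [Fintype S] [MeasurableSpace S] [DiscreteMeasurableSpace S] [Nonempty S]
    (μ : Measure Ω) [IsProbabilityMeasure μ]
    {d n : ℕ} (hn : 2 ≤ n)
    (X : Ω → (Fin d → ℝ)) (hX : Measurable X)
    (Y : Ω → S) (hY : Measurable Y)
    (rm : (Fin d → ℝ) → Fin (n - 1)) (hrm : Measurable rm)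
    (rn : (Fin d → ℝ) → Fin n) (hrn : Measurable rn)
    (A' : Fin (n - 1) → Matrix (Fin d) (Fin d) ℝ)
    (A : Fin n → Matrix (Fin d) (Fin d) ℝ)
    -- factorization on the support of `X` conditioned on `rn (X) = e`
    (hfact : ∀ e : Fin n, ∃ R : Matrix (Fin d) (Fin d) ℝ,
      ∀ x ∈ measSupport ((μ[|(fun ω => rn (X ω)) ⁻¹' {e}]).map X),
        (A' (rm x)).mulVec x = R.mulVec ((A e).mulVec x))
    -- identifiability of the routing index from the `n`-expert output
    (hident : ∃ ehat : (Fin d → ℝ) → Fin n, Measurable ehat ∧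
      ∀ᵐ ω ∂μ, rn (X ω) = ehat ((A (rn (X ω))).mulVec (X ω))) :
    mMutualInfo μ Y (fun ω => (A' (rm (X ω))).mulVec (X ω))
      ≤ mMutualInfo μ Y (fun ω => (A (rn (X ω))).mulVec (X ω)) := by
  obtain ⟨ehat, hehat, hid⟩ := hident
  choose R hR using hfact
  set Zn : Ω → (Fin d → ℝ) := fun ω => (A (rn (X ω))).mulVec (X ω) with hZndef
  set Zm : Ω → (Fin d → ℝ) := fun ω => (A' (rm (X ω))).mulVec (X ω) with hZmdef
  have hZn : Measurable Zn := measurable_mulVec_comp A (hrn.comp hX) hX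
  set g : (Fin d → ℝ) → (Fin d → ℝ) := fun z => (R (ehat z)).mulVec z with hgdef
  have hg : Measurable g := measurable_mulVec_comp R hehat measurable_id
  have hsupp := ae_mem_measSupport_cond μ hX (hrn.comp hX)
  have heq : Zm =ᵐ[μ] g ∘ Zn := by
    filter_upwards [hid, hsupp] with ω h1 h2
    have h3 := hR (rn (X ω)) (X ω) h2
    show (A' (rm (X ω))).mulVec (X ω) = (R (ehat (Zn ω))).mulVec (Zn ω)
    rw [← h1]
    exact h3
  have hle : mCondEntropy μ Y Zn ≤ mCondEntropy μ Y Zm :=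
    (mCondEntropy_le_comp μ hY hZn hg).trans_eq (mCondEntropy_congr μ heq.symm)
  have : mMutualInfo μ Y Zm = mEntropy μ Y - mCondEntropy μ Y Zm := rfl
  rw [mMutualInfo, mMutualInfo]
  exact sub_le_sub_left hle _
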